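/- Let a ≠ b be letters and L = ({[a]}·{[b]})*. Then ((ab)*, (ab)*) is a local typing (L·L = L), and ({[a]}, {[b]}) is a sound typing (({[a]})·({[b]}) ⊆ L), yet [a] ∉ L; consequently there is no perfect typing for the design (L, f₁ f₂), i.e., no pair (P₁,P₂) with P₁·P₂ = L such that every sound pair of nonempty languages is componentwise contained in (P₁,P₂). -/

import Mathlib

open Computability

theorem no_perfect_typing_abstar {α : Type} (a b : α) (hab : a ≠ b) :
    (({[a]} : Language α) * {[b]})∗ * (({[a]} : Language α) * {[b]})∗ =
      (({[a]} : Language α) * {[b]})∗ ∧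
    ({[a]} : Language α) * ({[b]} : Language α) ≤ (({[a]} : Language α) * {[b]})∗ ∧
    [a] ∉ (({[a]} : Language α) * {[b]})∗ ∧
    ¬ ∃ P₁ P₂ : Language α,
        P₁ * P₂ = (({[a]} : Language α) * {[b]})∗ ∧
        ∀ X Y : Language α, (∃ w, w ∈ X) → (∃ w, w ∈ Y) →
          X * Y ≤ (({[a]} : Language α) * {[b]})∗ → X ≤ P₁ ∧ Y ≤ P₂ := by
  set L : Language α := ({[a]} : Language α) * {[b]} with hL
  have hna : [a] ∉ L∗ := by
    intro h
    rw [Language.mem_kstar] at h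
    obtain ⟨S, hflat, hmem⟩ := h
    have hlen : ∀ y ∈ S, y.length = 2 := by
      intro y hy
      obtain ⟨u, hu, v, hv, rfl⟩ := hmem y hy
      change u = [a] at hu; change v = [b] at hv
      subst hu hv; rfl
    have : ([a] : List α).length = S.flatten.length := by rw [hflat]
    rw [List.length_flatten] at this
    have h2 : (S.map List.length).sum = 2 * S.length := by
      rw [List.map_congr_left (by simpa using hlen)]
      simp [List.map_const', Nat.mul_comm]
    simp [h2] at this
    omega
  refine ⟨kstar_mul_kstar L, le_kstar, hna, ?_⟩
  rintro ⟨P₁, P₂, hP, hperf⟩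
  have h1 : ({[a]} : Language α) ≤ P₁ :=
    (hperf {[a]} {[b]} ⟨[a], rfl⟩ ⟨[b], rfl⟩ le_kstar).1
  have h2 : (1 : Language α) ≤ P₂ :=
    (hperf (L∗) 1 ⟨[], Language.nil_mem_kstar L⟩ ⟨[], rfl⟩ (by rw [mul_one])).2
  have : [a] ∈ P₁ * P₂ := ⟨[a], h1 rfl, [], h2 rfl, by simp⟩
  rw [hP] at this
  exact hna this
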